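/- For any complex symmetric n×n matrix T with singular values λ_1,…,λ_n and any unitary n×n matrix V, ∑_i |(Vᵀ T V)_{ii}| ≤ ∑_i λ_i, i.e., ∑_i |(Vᵀ T V)_{ii}| ≤ ‖T‖ (trace norm). -/

import Mathlib

open scoped BigOperators Matrix ComplexOrder

/-- The trace norm of a complex matrix: `‖T‖ = Tr √(T Tᴴ)`, the sum of the
singular values of `T`. -/
noncomputable def traceNorm {n : ℕ} (T : Matrix (Fin n) (Fin n) ℂ) : ℝ :=
  (((Matrix.posSemidef_self_mul_conjTranspose T).1.eigenvectorUnitary.1 *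
    Matrix.diagonal (((↑) : ℝ → ℂ) ∘ Real.sqrt ∘ (Matrix.posSemidef_self_mul_conjTranspose T).1.eigenvalues) *
    (star (Matrix.posSemidef_self_mul_conjTranspose T).1.eigenvectorUnitary :
      Matrix (Fin n) (Fin n) ℂ)).trace).re

/-- For a complex symmetric matrix `T` and any unitary `V`,
`∑ i |(Vᵀ T V)ᵢᵢ| ≤ ‖T‖` (the trace norm, i.e. the sum of singular values). -/
theorem sum_abs_diag_le_traceNorm {n : ℕ}
    (T : Matrix (Fin n) (Fin n) ℂ) (hT : Tᵀ = T)
    (V : Matrix (Fin n) (Fin n) ℂ) (hV : V ∈ Matrix.unitaryGroup (Fin n) ℂ) :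
    ∑ i, ‖(Vᵀ * T * V) i i‖ ≤ traceNorm T := by
  classical
  have hH : (T * Tᴴ).PosSemidef := Matrix.posSemidef_self_mul_conjTranspose T
  set hHerm : (T * Tᴴ).IsHermitian := hH.1 with hHerm_def
  set P : Matrix (Fin n) (Fin n) ℂ := (hHerm.eigenvectorUnitary : Matrix (Fin n) (Fin n) ℂ)
    with hP_def
  set d : Fin n → ℝ := hHerm.eigenvalues with hd_def
  have hPmem : P ∈ Matrix.unitaryGroup (Fin n) ℂ := hHerm.eigenvectorUnitary.2
  have hPP : P * star P = 1 := Matrix.mem_unitaryGroup_iff.mp hPmem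
  have hPP' : star P * P = 1 := Matrix.mem_unitaryGroup_iff'.mp hPmem
  have hVV : V * star V = 1 := Matrix.mem_unitaryGroup_iff.mp hV
  have hVV' : star V * V = 1 := Matrix.mem_unitaryGroup_iff'.mp hV
  -- trace norm equals sum of square roots of eigenvalues of T Tᴴ
  have htrace : traceNorm T = ∑ k, Real.sqrt (d k) := by
    have : (Matrix.posSemidef_self_mul_conjTranspose T).1.eigenvectorUnitary.1 *
    Matrix.diagonal (((↑) : ℝ → ℂ) ∘ Real.sqrt ∘ (Matrix.posSemidef_self_mul_conjTranspose T).1.eigenvalues) *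
    (star (Matrix.posSemidef_self_mul_conjTranspose T).1.eigenvectorUnitary :
      Matrix (Fin n) (Fin n) ℂ) =
        P * Matrix.diagonal ((↑) ∘ Real.sqrt ∘ d) * star P := rfl
    rw [traceNorm, this, Matrix.trace_mul_cycle, hPP', one_mul, Matrix.trace_diagonal]
    simp [Complex.ofReal_sum]
  set A : Matrix (Fin n) (Fin n) ℂ := Vᵀ * P with hA_def
  set B : Matrix (Fin n) (Fin n) ℂ := star P * T * V with hB_def
  -- M = A * B
  have hM : Vᵀ * T * V = A * B := by
    rw [hA_def, hB_def]
    calc Vᵀ * T * V = Vᵀ * (P * star P) * T * V := by rw [hPP, mul_one]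
    _ = Vᵀ * P * (star P * T * V) := by simp only [mul_assoc]
  -- columns of A are unit vectors
  have hAunit : star A * A = 1 := by
    have h1 : star A * A = star P * (star Vᵀ * Vᵀ) * P := by
      rw [hA_def, star_mul]; simp only [mul_assoc]
    have h2 : star Vᵀ * Vᵀ = 1 := by
      have : star Vᵀ = (star V)ᵀ := Matrix.ext fun i j => rfl
      rw [this, ← Matrix.transpose_mul, hVV, Matrix.transpose_one]
    rw [h1, h2, mul_one, hPP']
  have hAcol : ∀ k, ∑ i, ‖A i k‖ ^ 2 = 1 := by
    intro k
    have h := congrArg (fun M : Matrix (Fin n) (Fin n) ℂ => (M k k).re) hAunit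
    simp only [Matrix.mul_apply, Matrix.conjTranspose_apply, Matrix.one_apply_eq,
      Matrix.star_eq_conjTranspose, Complex.one_re] at h
    rw [← h, Complex.re_sum]
    refine Finset.sum_congr rfl fun i _ => ?_
    rw [Complex.sq_norm]
    simp [Complex.normSq_apply, Complex.mul_re]
  -- rows of B have squared norm d k
  have hBB : B * star B = Matrix.diagonal ((↑) ∘ d : Fin n → ℂ) := by
    have h1 : B * star B = star P * (T * (V * star V) * star T) * P := by
      rw [hB_def]
      simp only [star_mul, star_star]
      simp only [mul_assoc]
    rw [h1, hVV, mul_one]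
    have : T * star T = T * Tᴴ := rfl
    rw [this]
    have h := Matrix.IsHermitian.conjStarAlgAut_star_eigenvectorUnitary hHerm
    simp only [Unitary.conjStarAlgAut_apply, Unitary.coe_star, star_star] at h
    exact h
  have hBrow : ∀ k, ∑ i, ‖B k i‖ ^ 2 = d k := by
    intro k
    have h := congrArg (fun M : Matrix (Fin n) (Fin n) ℂ => (M k k).re) hBB
    simp only [Matrix.mul_apply, Matrix.conjTranspose_apply, Matrix.diagonal_apply_eq,
      Matrix.star_eq_conjTranspose, Function.comp_apply, Complex.ofReal_re] at h
    rw [← h, Complex.re_sum]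
    refine Finset.sum_congr rfl fun i _ => ?_
    rw [Complex.sq_norm]
    simp [Complex.normSq_apply, Complex.mul_re]
  -- main estimate
  rw [htrace, hM]
  calc ∑ i, ‖(A * B) i i‖
      ≤ ∑ i, ∑ k, ‖A i k‖ * ‖B k i‖ := by
        refine Finset.sum_le_sum fun i _ => ?_
        rw [Matrix.mul_apply]
        refine (norm_sum_le _ _).trans_eq ?_
        exact Finset.sum_congr rfl fun k _ => norm_mul _ _
    _ = ∑ k, ∑ i, ‖A i k‖ * ‖B k i‖ := Finset.sum_comm
    _ ≤ ∑ k, Real.sqrt (d k) := by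
        refine Finset.sum_le_sum fun k _ => ?_
        have hnn : (0:ℝ) ≤ ∑ i, ‖A i k‖ * ‖B k i‖ :=
          Finset.sum_nonneg fun i _ => mul_nonneg (norm_nonneg _) (norm_nonneg _)
        have hcs := Finset.sum_mul_sq_le_sq_mul_sq Finset.univ
          (fun i => ‖A i k‖) (fun i => ‖B k i‖)
        rw [hAcol k, hBrow k, one_mul] at hcs
        have := Real.sqrt_le_sqrt hcs
        rwa [Real.sqrt_sq hnn] at this
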